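/- Joining two Ising chains: conjugating the Hamiltonian H = -Z_1 - ∑_{i=1}^{k} Z_i Z_{i+1} - Z_{k+2} - ∑_{i=k+2}^{m-1} Z_i Z_{i+1} on m qubits by the depth-1 commuting gateset ∏_{i=k+2}^{m} CX(k+1, i) yields H' = -Z_1 - ∑_{i=1}^{m-1} Z_i Z_{i+1}. -/

import Mathlib

open Matrix

noncomputable section

/-- The CNOT gate on an `n`-qubit register, with control `c` and target `t`,
as the permutation matrix of `x ↦ x` with the target bit replaced by `x t + x c`. -/
def CNOT (n : ℕ) (c t : Fin n) :
    Matrix (Fin n → Fin 2) (Fin n → Fin 2) ℂ :=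
  Matrix.of fun x y => if x = Function.update y t (y t + y c) then 1 else 0

/-- The Z-type Pauli operator `∏_{i ∈ s} Z_i` on an `n`-qubit register. -/
def ZPauli (n : ℕ) (s : Finset (Fin n)) :
    Matrix (Fin n → Fin 2) (Fin n → Fin 2) ℂ :=
  Matrix.diagonal fun x => (-1 : ℂ) ^ (∑ i ∈ s, (x i : ℕ))

/-- The X-type Pauli operator `∏_{i ∈ s} X_i` on an `n`-qubit register. -/
def XPauli (n : ℕ) (s : Finset (Fin n)) :
    Matrix (Fin n → Fin 2) (Fin n → Fin 2) ℂ :=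
  Matrix.of fun x y => if (∀ i, x i = y i + if i ∈ s then 1 else 0) then 1 else 0

/-- `U` is a product of CNOT gates. -/
def IsCNOTProduct (n : ℕ) (U : Matrix (Fin n → Fin 2) (Fin n → Fin 2) ℂ) : Prop :=
  ∃ l : List (Fin n × Fin n), (∀ p ∈ l, p.1 ≠ p.2) ∧
    U = (l.map fun p => CNOT n p.1 p.2).prod

lemma fin2_add_self (a : Fin 2) : a + a = 0 := by fin_cases a <;> decide

/-- Permutation matrix of `σ`. -/
def Pm (n : ℕ) (σ : Equiv.Perm (Fin n → Fin 2)) :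
    Matrix (Fin n → Fin 2) (Fin n → Fin 2) ℂ :=
  Matrix.of fun x y => if x = σ y then 1 else 0

lemma Pm_congr {n : ℕ} {σ τ : Equiv.Perm (Fin n → Fin 2)} (h : ∀ y, σ y = τ y) :
    Pm n σ = Pm n τ := by
  ext x y; simp [Pm, h]

lemma Pm_mul {n : ℕ} (σ τ : Equiv.Perm (Fin n → Fin 2)) :
    Pm n σ * Pm n τ = Pm n (τ.trans σ) := by
  ext x y
  simp only [Pm, Matrix.mul_apply, Matrix.of_apply, ite_mul, one_mul, zero_mul,
    Equiv.trans_apply]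
  rw [Finset.sum_congr rfl (fun z _ => show _ = if z = τ y then (if x = σ z then (1:ℂ) else 0) else 0 from by
    split <;> split <;> simp_all)]
  rw [Finset.sum_ite_eq' Finset.univ (τ y) (fun z => if x = σ z then (1:ℂ) else 0)]
  simp
  exact if_congr Iff.rfl rfl rfl

lemma Pm_one {n : ℕ} : Pm n (Equiv.refl _) = 1 := by
  ext x y; simp [Pm, Matrix.one_apply, eq_comm]; exact if_congr Iff.rfl rfl rfl

lemma Pm_inv {n : ℕ} (σ : Equiv.Perm (Fin n → Fin 2)) :
    (Pm n σ)⁻¹ = Pm n σ.symm := by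
  apply Matrix.inv_eq_right_inv
  rw [Pm_mul]
  rw [show σ.symm.trans σ = Equiv.refl _ from by ext z; simp]
  exact Pm_one

lemma Pm_conj_diag {n : ℕ} (σ : Equiv.Perm (Fin n → Fin 2)) (f : (Fin n → Fin 2) → ℂ) :
    Pm n σ * Matrix.diagonal f * (Pm n σ)⁻¹ = Matrix.diagonal (fun x => f (σ.symm x)) := by
  rw [Pm_inv]
  ext x y
  simp only [Pm, Matrix.mul_apply, Matrix.of_apply, Matrix.diagonal_apply, ite_mul, one_mul,
    zero_mul, mul_ite, mul_one, mul_zero]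
  rw [Finset.sum_congr rfl (fun z _ => show _ = if z = σ.symm y then (if x = σ z then f z else 0) else 0 from by
    rw [Finset.sum_ite_eq' Finset.univ z (fun w => if x = σ w then f w else 0)]
    simp)]
  rw [Finset.sum_ite_eq' Finset.univ (σ.symm y) (fun z => if x = σ z then f z else 0)]
  simp only [Finset.mem_univ, if_true, Equiv.apply_symm_apply]
  by_cases h : x = y
  · subst h; simp [Matrix.diagonal_apply]
  · simp [Matrix.diagonal_apply, h]

/-- add `x c` to every bit in `L`. -/
def flipFun {n : ℕ} (c : Fin n) (L : List (Fin n)) (x : Fin n → Fin 2) : Fin n → Fin 2 :=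
  fun j => x j + if j ∈ L then x c else 0

lemma flipFun_involutive {n : ℕ} (c : Fin n) (L : List (Fin n)) (hc : c ∉ L) :
    Function.Involutive (flipFun c L) := by
  intro x
  funext j
  have hcc : flipFun c L x c = x c := by simp [flipFun, hc]
  by_cases h : j ∈ L
  · simp [flipFun, h, hc, add_assoc, fin2_add_self]
  · simp [flipFun, h]

def flipPerm {n : ℕ} (c : Fin n) (L : List (Fin n)) (hc : c ∉ L) :
    Equiv.Perm (Fin n → Fin 2) :=
  (flipFun_involutive c L hc).toPerm

@[simp] lemma flipPerm_apply {n : ℕ} (c : Fin n) (L : List (Fin n)) (hc : c ∉ L)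
    (x : Fin n → Fin 2) : flipPerm c L hc x = flipFun c L x := rfl

@[simp] lemma flipPerm_symm_apply {n : ℕ} (c : Fin n) (L : List (Fin n)) (hc : c ∉ L)
    (x : Fin n → Fin 2) : (flipPerm c L hc).symm x = flipFun c L x := rfl

lemma CNOT_eq_Pm {n : ℕ} (c t : Fin n) (h : t ≠ c) :
    CNOT n c t = Pm n (flipPerm c [t] (by simp [h.symm])) := by
  ext x y
  simp only [CNOT, Pm, Matrix.of_apply, flipPerm_apply]
  refine if_congr ?_ rfl rfl
  constructor <;> intro hx <;> rw [hx] <;> funext j <;>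
    by_cases hj : j = t <;> simp [flipFun, Function.update, hj, add_comm]

lemma prod_CNOT_eq_Pm {n : ℕ} (c : Fin n) (L : List (Fin n)) (hc : c ∉ L) (hnd : L.Nodup) :
    (L.map fun t => CNOT n c t).prod = Pm n (flipPerm c L hc) := by
  induction L with
  | nil =>
    simp only [List.map_nil, List.prod_nil]
    rw [show flipPerm c [] hc = Equiv.refl _ from by ext x; simp [flipFun]]
    exact Pm_one.symm
  | cons t L' ih =>
    have hc' : c ∉ L' := fun h => hc (List.mem_cons_of_mem _ h)
    have ht : t ≠ c := fun h => hc (h ▸ List.mem_cons_self)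
    have htL' : t ∉ L' := (List.nodup_cons.mp hnd).1
    rw [List.map_cons, List.prod_cons, ih hc' (List.nodup_cons.mp hnd).2,
      CNOT_eq_Pm c t ht, Pm_mul]
    apply Pm_congr
    intro x
    funext j
    simp only [Equiv.trans_apply, flipPerm_apply]
    by_cases hj : j = t
    · subst hj
      simp [flipFun, htL', ht, hc', add_comm]
    · have : j ∈ t :: L' ↔ j ∈ L' := by simp [hj]
      simp [flipFun, hj, this, ht.symm]

lemma diagonal_sum' {n α : Type*} [DecidableEq n] [AddCommMonoid α] {ι : Type*} (s : Finset ι)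
    (f : ι → n → α) :
    ∑ i ∈ s, Matrix.diagonal (f i) = Matrix.diagonal (fun x => ∑ i ∈ s, f i x) := by
  ext x y
  by_cases h : x = y <;> simp [Matrix.sum_apply, Matrix.diagonal_apply, h]

lemma sgn1 (a b : Fin 2) : ((-1:ℂ))^(((a+b : Fin 2)):ℕ) = (-1)^((a:ℕ)+(b:ℕ)) := by
  fin_cases a <;> fin_cases b <;> norm_num [show ((2:Fin 2):ℕ) = 0 from rfl, show ((1+1:Fin 2):ℕ) = 0 from rfl]

lemma sgn3 (a b c : Fin 2) :
    (-1:ℂ)^((((a+c : Fin 2)):ℕ) + (((b+c : Fin 2)):ℕ)) = (-1)^((a:ℕ)+(b:ℕ)) := by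
  fin_cases a <;> fin_cases b <;> fin_cases c <;> norm_num [show ((2:Fin 2):ℕ) = 0 from rfl, show ((1+1:Fin 2):ℕ) = 0 from rfl]

lemma pointwise (l k : ℕ) (x y : Fin (k + 1 + (l + 1)) → Fin 2)
    (hy : ∀ j : Fin (k + 1 + (l + 1)), y j = if k < j.1 then x j + x ⟨k, by omega⟩ else x j) :
    -(-1 : ℂ) ^ (∑ i ∈ ({⟨0, by omega⟩} : Finset (Fin (k + 1 + (l + 1)))), (y i : ℕ))
      - (∑ i : Fin k, (-1 : ℂ) ^ (∑ j ∈ ({⟨i.1, by omega⟩, ⟨i.1 + 1, by omega⟩} :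
          Finset (Fin (k + 1 + (l + 1)))), (y j : ℕ)))
      - (-1 : ℂ) ^ (∑ i ∈ ({⟨k + 1, by omega⟩} : Finset (Fin (k + 1 + (l + 1)))), (y i : ℕ))
      - (∑ i : Fin l, (-1 : ℂ) ^ (∑ j ∈ ({⟨k + 1 + i.1, by omega⟩, ⟨k + 2 + i.1, by omega⟩} :
          Finset (Fin (k + 1 + (l + 1)))), (y j : ℕ)))
    = -(-1 : ℂ) ^ (∑ i ∈ ({⟨0, by omega⟩} : Finset (Fin (k + 1 + (l + 1)))), (x i : ℕ))
      - (∑ i : Fin (k + l + 1), (-1 : ℂ) ^ (∑ j ∈ ({⟨i.1, by omega⟩, ⟨i.1 + 1, by omega⟩} :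
          Finset (Fin (k + 1 + (l + 1)))), (x j : ℕ))) := by
  obtain ⟨s, hsv⟩ : ∃ s : ℕ → ℂ, ∀ (j : ℕ) (h : j + 1 < k + 1 + (l + 1)),
      s j = (-1 : ℂ) ^ ((x ⟨j, by omega⟩ : ℕ) + (x ⟨j + 1, h⟩ : ℕ)) :=
    ⟨fun j => if h : j + 1 < k + 1 + (l + 1) then
        (-1 : ℂ) ^ ((x ⟨j, by omega⟩ : ℕ) + (x ⟨j + 1, h⟩ : ℕ)) else 0,
      fun j h => dif_pos h⟩
  simp only [Finset.sum_singleton]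
  have h0 : y ⟨0, by omega⟩ = x ⟨0, by omega⟩ := by
    rw [hy]; exact if_neg (Nat.not_lt_zero k)
  have h2 : (∑ i : Fin k, (-1 : ℂ) ^ (∑ j ∈ ({⟨i.1, by omega⟩, ⟨i.1 + 1, by omega⟩} :
          Finset (Fin (k + 1 + (l + 1)))), (y j : ℕ))) = ∑ i ∈ Finset.range k, s i := by
    rw [← Fin.sum_univ_eq_sum_range (fun i => s i) k]
    refine Finset.sum_congr rfl fun i _ => ?_
    rw [Finset.sum_pair (by simp [Fin.ext_iff])]
    simp only [hy]
    rw [if_neg (show ¬ k < i.1 from not_lt.mpr i.2.le),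
      if_neg (show ¬ k < i.1 + 1 from not_lt.mpr i.2), hsv i.1 (by omega)]
  have h3 : ((-1 : ℂ)) ^ ((y ⟨k + 1, by omega⟩ : Fin 2) : ℕ) = s k := by
    rw [hy, if_pos (Nat.lt_succ_self k), sgn1, hsv k (by omega), add_comm]
  have h4 : (∑ i : Fin l, (-1 : ℂ) ^ (∑ j ∈ ({⟨k + 1 + i.1, by omega⟩, ⟨k + 2 + i.1, by omega⟩} :
          Finset (Fin (k + 1 + (l + 1)))), (y j : ℕ)))
      = ∑ i ∈ Finset.range l, s (k + 1 + i) := by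
    rw [← Fin.sum_univ_eq_sum_range (fun i => s (k + 1 + i)) l]
    refine Finset.sum_congr rfl fun i _ => ?_
    rw [Finset.sum_pair (by simp [Fin.ext_iff])]
    simp only [hy]
    rw [if_pos (show k < k + 1 + i.1 by omega), if_pos (show k < k + 2 + i.1 by omega),
      sgn3, hsv (k + 1 + i.1) (by omega)]
    have : (⟨k + 1 + i.1 + 1, by omega⟩ : Fin (k + 1 + (l + 1))) = ⟨k + 2 + i.1, by omega⟩ := by
      simp [Fin.ext_iff]; omega
    rw [this]
  have h5 : (∑ i : Fin (k + l + 1), (-1 : ℂ) ^ (∑ j ∈ ({⟨i.1, by omega⟩, ⟨i.1 + 1, by omega⟩} :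
          Finset (Fin (k + 1 + (l + 1)))), (x j : ℕ))) = ∑ i ∈ Finset.range (k + l + 1), s i := by
    rw [← Fin.sum_univ_eq_sum_range (fun i => s i) (k + l + 1)]
    refine Finset.sum_congr rfl fun i _ => ?_
    rw [Finset.sum_pair (by simp [Fin.ext_iff]), hsv i.1 (by omega)]
  have hsplit : ∑ i ∈ Finset.range (k + l + 1), s i
      = (∑ i ∈ Finset.range k, s i) + (s k + ∑ i ∈ Finset.range l, s (k + 1 + i)) := by
    rw [show k + l + 1 = k + (1 + l) from by omega, Finset.sum_range_add]
    congr 1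
    rw [Finset.sum_range_add (fun i => s (k + i)) 1 l, Finset.sum_range_one]
    congr 1
    exact Finset.sum_congr rfl fun i _ => congrArg s (by omega)
  rw [h0, h2, h3, h4, h5, hsplit]
  ring

/-- Joining two Ising chains with magnetic fields at their left ends, of lengths `k+1`
and `l+1` (qubits `0,…,k` and `k+1,…,k+l+1` in 0-indexed notation, register size
`m = k+1+(l+1)`): conjugating
`H = -Z_0 - ∑_{i=0}^{k-1} Z_i Z_{i+1} - Z_{k+1} - ∑_{i=k+1}^{k+l} Z_i Z_{i+1}`
by the depth-1 commuting gateset `∏_{j=k+1}^{k+l+1} CX(k, j)` yields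
`H' = -Z_0 - ∑_{i=0}^{k+l} Z_i Z_{i+1}`. -/
theorem stmt16 (k l : ℕ) :
    (((List.finRange (l + 1)).map fun j =>
        CNOT (k + 1 + (l + 1)) ⟨k, by omega⟩ ⟨k + 1 + j.1, by omega⟩).prod)
      * (-(ZPauli (k + 1 + (l + 1)) {⟨0, by omega⟩})
          - (∑ i : Fin k, ZPauli (k + 1 + (l + 1)) {⟨i.1, by omega⟩, ⟨i.1 + 1, by omega⟩})
          - ZPauli (k + 1 + (l + 1)) {⟨k + 1, by omega⟩}
          - (∑ i : Fin l, ZPauli (k + 1 + (l + 1))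
              {⟨k + 1 + i.1, by omega⟩, ⟨k + 2 + i.1, by omega⟩}))
      * (((List.finRange (l + 1)).map fun j =>
          CNOT (k + 1 + (l + 1)) ⟨k, by omega⟩ ⟨k + 1 + j.1, by omega⟩).prod)⁻¹
    = -(ZPauli (k + 1 + (l + 1)) {⟨0, by omega⟩})
        - (∑ i : Fin (k + l + 1), ZPauli (k + 1 + (l + 1))
            {⟨i.1, by omega⟩, ⟨i.1 + 1, by omega⟩}) := by
  have hcL : (⟨k, by omega⟩ : Fin (k + 1 + (l + 1))) ∉
      (List.finRange (l + 1)).map (fun j : Fin (l + 1) =>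
        (⟨k + 1 + j.1, by omega⟩ : Fin (k + 1 + (l + 1)))) := by
    simp [List.mem_map, Fin.ext_iff]
    omega
  have hmemL : ∀ j : Fin (k + 1 + (l + 1)),
      (j ∈ (List.finRange (l + 1)).map (fun j : Fin (l + 1) =>
        (⟨k + 1 + j.1, by omega⟩ : Fin (k + 1 + (l + 1))))) ↔ k < j.1 := by
    intro j
    simp only [List.mem_map, List.mem_finRange, true_and, Fin.ext_iff]
    constructor
    · rintro ⟨a, ha⟩; omega
    · intro h
      refine ⟨⟨j.1 - (k + 1), by omega⟩, ?_⟩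
      simp; omega
  have hnd : ((List.finRange (l + 1)).map (fun j : Fin (l + 1) =>
      (⟨k + 1 + j.1, by omega⟩ : Fin (k + 1 + (l + 1))))).Nodup := by
    refine List.Nodup.map ?_ (List.nodup_finRange _)
    intro a b hab
    rw [Fin.ext_iff] at hab ⊢
    simp at hab
    omega
  have hU : ((List.finRange (l + 1)).map fun j =>
        CNOT (k + 1 + (l + 1)) ⟨k, by omega⟩ ⟨k + 1 + j.1, by omega⟩).prod
      = Pm (k + 1 + (l + 1)) (flipPerm _ _ hcL) := by
    rw [← prod_CNOT_eq_Pm _ _ hcL hnd, List.map_map]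
    rfl
  rw [hU]
  simp only [ZPauli, diagonal_sum', Matrix.diagonal_neg, Matrix.diagonal_sub]
  rw [Pm_inv, ← Pm_inv, Pm_conj_diag]
  refine congrArg _ (funext fun x => ?_)
  simp only [flipPerm_symm_apply]
  refine pointwise l k x _ fun j => ?_
  simp only [flipFun, hmemL j]
  split <;> simp
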